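/- arXiv:math/0304182 — 4 statements merged into one kernel-verified Lean document; each statement's English description precedes it below -/
import Mathlib

section
/- Let (V, ω_V) and (W, ω_W) be finite-dimensional symplectic vector spaces, Γ ⊆ V × W⁻ a Lagrangian subspace, and Σ ⊆ W an isotropic subspace. Then Γ∘Σ is an isotropic subspace of V, and U₁ := {w ∈ Σ° : (0,w) ∈ Γ} is an isotropic subspace of W. -/
/-- The symplectic orthogonal `S° = {v ∈ V : ω(s,v) = 0 for all s ∈ S}` of a subspace `S`. -/
def symplOrth {V : Type*} [AddCommGroup V] [Module ℝ V]
    (ω : V →ₗ[ℝ] V →ₗ[ℝ] ℝ) (S : Submodule ℝ V) : Submodule ℝ V where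
  carrier := {v | ∀ s ∈ S, ω s v = 0}
  add_mem' := by
    intro a b ha hb s hs
    simp [ha s hs, hb s hs]
  zero_mem' := by intro s hs; simp
  smul_mem' := by
    intro c a ha s hs
    simp [ha s hs]

/-- The twisted product symplectic form on `V × W⁻`:
`((v,w),(v',w')) ↦ ω_V(v,v') − ω_W(w,w')`. -/
def prodForm {V W : Type*} [AddCommGroup V] [Module ℝ V] [AddCommGroup W] [Module ℝ W]
    (ωV : V →ₗ[ℝ] V →ₗ[ℝ] ℝ) (ωW : W →ₗ[ℝ] W →ₗ[ℝ] ℝ) :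
    (V × W) →ₗ[ℝ] (V × W) →ₗ[ℝ] ℝ :=
  LinearMap.mk₂ ℝ (fun p q => ωV p.1 q.1 - ωW p.2 q.2)
    (by intro p p' q; simp; ring)
    (by intro c p q; simp; ring)
    (by intro p q q'; simp; ring)
    (by intro c p q; simp; ring)

/-- The composition `Γ∘Σ = {v ∈ V : ∃ w ∈ Σ, (v,w) ∈ Γ}` of a linear canonical relation
`Γ ⊆ V × W⁻` with a subspace `Σ ⊆ W`. -/
def gammaComp {V W : Type*} [AddCommGroup V] [Module ℝ V] [AddCommGroup W] [Module ℝ W]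
    (Γ : Submodule ℝ (V × W)) (S : Submodule ℝ W) : Submodule ℝ V where
  carrier := {v | ∃ w ∈ S, (v, w) ∈ Γ}
  add_mem' := by
    rintro a b ⟨wa, hwa, ha⟩ ⟨wb, hwb, hb⟩
    exact ⟨wa + wb, S.add_mem hwa hwb, Γ.add_mem ha hb⟩
  zero_mem' := ⟨0, S.zero_mem, Γ.zero_mem⟩
  smul_mem' := by
    rintro c a ⟨w, hw, h⟩
    exact ⟨c • w, S.smul_mem c hw, by simpa [Prod.smul_mk] using Γ.smul_mem c h⟩

/-- If `Γ ⊆ V × W⁻` is Lagrangian and `Σ ⊆ W` is isotropic, then `Γ∘Σ` is isotropic in `V`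
and `U₁ = {w ∈ Σ° : (0,w) ∈ Γ}` is isotropic in `W`. -/
theorem stmt4 {V W : Type*}
    [AddCommGroup V] [Module ℝ V] [FiniteDimensional ℝ V]
    [AddCommGroup W] [Module ℝ W] [FiniteDimensional ℝ W]
    (ωV : V →ₗ[ℝ] V →ₗ[ℝ] ℝ) (ωW : W →ₗ[ℝ] W →ₗ[ℝ] ℝ)
    (haltV : ∀ v, ωV v v = 0) (hndV : ∀ v, (∀ w, ωV v w = 0) → v = 0)
    (haltW : ∀ w, ωW w w = 0) (hndW : ∀ w, (∀ w', ωW w w' = 0) → w = 0)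
    (Γ : Submodule ℝ (V × W)) (hΓ : Γ = symplOrth (prodForm ωV ωW) Γ)
    (S : Submodule ℝ W) (hS : S ≤ symplOrth ωW S) :
    gammaComp Γ S ≤ symplOrth ωV (gammaComp Γ S) ∧
    (symplOrth ωW S ⊓ Γ.comap (LinearMap.inr ℝ V W)) ≤
      symplOrth ωW (symplOrth ωW S ⊓ Γ.comap (LinearMap.inr ℝ V W)) := by
  
  constructor
  · rintro v ⟨w, hwS, hvw⟩ v' ⟨w', hw'S, hv'w'⟩
    have h1 : (v, w) ∈ symplOrth (prodForm ωV ωW) Γ := hΓ ▸ hvw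
    have h2 := h1 (v', w') hv'w'
    have h3 : ωW w' w = 0 := hS hwS w' hw'S
    simpa [prodForm, h3] using h2
  · rintro w ⟨hwS, hwΓ⟩ w' ⟨hw'S, hw'Γ⟩
    have h1 : ((0 : V), w) ∈ symplOrth (prodForm ωV ωW) Γ := hΓ ▸ hwΓ
    have h2 := h1 ((0 : V), w') hw'Γ
    simpa [prodForm] using h2
end

section
/- Let (V, ω_V) and (W, ω_W) be finite-dimensional symplectic vector spaces, Γ ⊆ V × W⁻ a Lagrangian subspace, Σ ⊆ W an isotropic subspace, and assume U₀ = {0}. Set M := {w ∈ Σ° : ω_W(w,u) = 0 for all u ∈ U₁}. Then U₁ + Σ ⊆ M, ω_W vanishes on pairs from M × (U₁ + Σ), and there is a linear isomorphism T : M/(U₁ + Σ) → (Γ∘Σ)°/(Γ∘Σ) under which the bilinear form induced by ω_W on M/(U₁ + Σ) corresponds to the bilinear form induced by ω_V on (Γ∘Σ)°/(Γ∘Σ); i.e., whenever T[w] = [v] and T[w'] = [v'] one has ω_W(w,w') = ω_V(v,v'). -/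
section aux
open Module
variable {X : Type*} [AddCommGroup X] [Module ℝ X]
variable {ω : X →ₗ[ℝ] X →ₗ[ℝ] ℝ}

lemma mem_symplOrth {S : Submodule ℝ X} {v : X} :
    v ∈ symplOrth ω S ↔ ∀ s ∈ S, ω s v = 0 := Iff.rfl

lemma skew (halt : ∀ x, ω x x = 0) (a b : X) : ω a b = - ω b a := by
  have h := halt (a + b)
  simp only [map_add, LinearMap.add_apply, halt a, halt b] at h
  linarith

lemma symplOrth_antitone {A B : Submodule ℝ X} (h : A ≤ B) :
    symplOrth ω B ≤ symplOrth ω A := fun v hv s hs => hv s (h hs)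

lemma le_symplOrth_symplOrth (halt : ∀ x, ω x x = 0) (A : Submodule ℝ X) :
    A ≤ symplOrth ω (symplOrth ω A) := by
  intro a ha s hs
  rw [skew halt, hs a ha, neg_zero]

lemma finrank_symplOrth [FiniteDimensional ℝ X] (halt : ∀ x, ω x x = 0)
    (hnd : ∀ v, (∀ w, ω v w = 0) → v = 0) (A : Submodule ℝ X) :
    finrank ℝ (symplOrth ω A) + finrank ℝ A = finrank ℝ X := by
  set f : X →ₗ[ℝ] Module.Dual ℝ A := (A.subtype.dualMap).comp ω.flip with hf
  have hker : LinearMap.ker f = symplOrth ω A := by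
    ext v
    constructor
    · intro hv s hs
      have := congrArg (fun φ => φ ⟨s, hs⟩) hv
      simpa [hf] using this
    · intro hv
      ext s
      simpa [hf] using hv s s.2
  have hinj : Function.Injective (ω.flip) := by
    rw [← LinearMap.ker_eq_bot]
    ext v
    simp only [LinearMap.mem_ker, Submodule.mem_bot]
    constructor
    · intro hv
      apply hnd
      intro w
      have : ω.flip v w = 0 := by rw [hv]; rfl
      have h2 : ω w v = 0 := this
      rw [skew halt, h2, neg_zero]
    · intro hv; rw [hv]; simp
  have hsurjflip : Function.Surjective (ω.flip) := by
    rw [← LinearMap.injective_iff_surjective_of_finrank_eq_finrank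
      (Subspace.dual_finrank_eq).symm]
    exact hinj
  have hsurj : Function.Surjective f :=
    (LinearMap.dualMap_surjective_of_injective A.injective_subtype).comp hsurjflip
  have := LinearMap.finrank_range_add_finrank_ker f
  rw [LinearMap.range_eq_top.mpr hsurj, hker, finrank_top, Subspace.dual_finrank_eq] at this
  omega

lemma symplOrth_symplOrth [FiniteDimensional ℝ X] (halt : ∀ x, ω x x = 0)
    (hnd : ∀ v, (∀ w, ω v w = 0) → v = 0) (A : Submodule ℝ X) :
    symplOrth ω (symplOrth ω A) = A := by
  have h1 := finrank_symplOrth halt hnd A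
  have h2 := finrank_symplOrth halt hnd (symplOrth ω A)
  exact (Submodule.eq_of_le_of_finrank_le (le_symplOrth_symplOrth halt A) (by omega)).symm

lemma symplOrth_sup (A B : Submodule ℝ X) :
    symplOrth ω (A ⊔ B) = symplOrth ω A ⊓ symplOrth ω B := by
  apply le_antisymm
  · exact le_inf (symplOrth_antitone le_sup_left) (symplOrth_antitone le_sup_right)
  · rintro v ⟨hva, hvb⟩ s hs
    obtain ⟨a, ha, b, hb, rfl⟩ := Submodule.mem_sup.mp hs
    simp [map_add, LinearMap.add_apply, hva a ha, hvb b hb]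

lemma symplOrth_inf [FiniteDimensional ℝ X] (halt : ∀ x, ω x x = 0)
    (hnd : ∀ v, (∀ w, ω v w = 0) → v = 0) (A B : Submodule ℝ X) :
    symplOrth ω (A ⊓ B) = symplOrth ω A ⊔ symplOrth ω B := by
  conv_lhs => rw [← symplOrth_symplOrth halt hnd A, ← symplOrth_symplOrth halt hnd B]
  rw [← symplOrth_sup, symplOrth_symplOrth halt hnd]

lemma symplOrth_flip (halt : ∀ x, ω x x = 0) (A : Submodule ℝ X) :
    symplOrth ω.flip A = symplOrth ω A := by
  ext v
  constructor
  · intro hv s hs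
    have : ω v s = 0 := hv s hs
    rw [skew halt, this, neg_zero]
  · intro hv s hs
    have : ω s v = 0 := hv s hs
    show ω v s = 0
    rw [skew halt, this, neg_zero]

end aux

/-- Symplectic reduction: with `U₀ = 0`, letting `M = {w ∈ Σ° : ω_W(w,u) = 0 ∀ u ∈ U₁}`,
one has `U₁ + Σ ⊆ M`, `ω_W` vanishes on `M × (U₁ + Σ)`, and `M/(U₁+Σ)` is linearly and
symplectically isomorphic to `(Γ∘Σ)°/(Γ∘Σ)`. -/
theorem stmt5 {V W : Type*}
    [AddCommGroup V] [Module ℝ V] [FiniteDimensional ℝ V]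
    [AddCommGroup W] [Module ℝ W] [FiniteDimensional ℝ W]
    (ωV : V →ₗ[ℝ] V →ₗ[ℝ] ℝ) (ωW : W →ₗ[ℝ] W →ₗ[ℝ] ℝ)
    (haltV : ∀ v, ωV v v = 0) (hndV : ∀ v, (∀ w, ωV v w = 0) → v = 0)
    (haltW : ∀ w, ωW w w = 0) (hndW : ∀ w, (∀ w', ωW w w' = 0) → w = 0)
    (Γ : Submodule ℝ (V × W)) (hΓ : Γ = symplOrth (prodForm ωV ωW) Γ)
    (S : Submodule ℝ W) (hS : S ≤ symplOrth ωW S)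
    (hU0 : S ⊓ Γ.comap (LinearMap.inr ℝ V W) = ⊥)
    (U1 : Submodule ℝ W) (hU1 : U1 = symplOrth ωW S ⊓ Γ.comap (LinearMap.inr ℝ V W))
    (M : Submodule ℝ W) (hM : M = symplOrth ωW S ⊓ symplOrth (ωW.flip) U1)
    (GS : Submodule ℝ V) (hGS : GS = gammaComp Γ S) :
    U1 ⊔ S ≤ M ∧
    (∀ w ∈ M, ∀ w' ∈ U1 ⊔ S, ωW w w' = 0) ∧
    ∃ T : (M ⧸ ((U1 ⊔ S).comap M.subtype)) ≃ₗ[ℝ]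
          ((symplOrth ωV GS) ⧸ (GS.comap (symplOrth ωV GS).subtype)),
      ∀ (w w' : M) (v v' : symplOrth ωV GS),
        T (Submodule.Quotient.mk w) = Submodule.Quotient.mk v →
        T (Submodule.Quotient.mk w') = Submodule.Quotient.mk v' →
        ωW w w' = ωV v v' := by
  classical
  -- basic Lagrangian facts
  have hLag : ∀ p ∈ Γ, ∀ q ∈ Γ, ωV p.1 q.1 = ωW p.2 q.2 := by
    intro p hp q hq
    have h : prodForm ωV ωW p q = 0 := by
      rw [hΓ] at hq; exact hq p hp
    simp only [prodForm, LinearMap.mk₂_apply] at h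
    linarith
  have hmem : ∀ p : V × W, (∀ q ∈ Γ, ωV q.1 p.1 = ωW q.2 p.2) → p ∈ Γ := by
    intro p h
    rw [hΓ]
    intro q hq
    simp only [prodForm, LinearMap.mk₂_apply]
    rw [h q hq]; ring
  set K : Submodule ℝ W := Γ.comap (LinearMap.inr ℝ V W) with hK
  have hKmem : ∀ w : W, w ∈ K ↔ ((0 : V), w) ∈ Γ := by
    intro w; rw [hK]; simp [Submodule.mem_comap]
  set KV : Submodule ℝ V := Γ.comap (LinearMap.inl ℝ V W) with hKV
  have hKVmem : ∀ v : V, v ∈ KV ↔ (v, (0 : W)) ∈ Γ := by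
    intro v; rw [hKV]; simp [Submodule.mem_comap]
  set prW : Submodule ℝ W := Γ.map (LinearMap.snd ℝ V W) with hprWdef
  have hprWmem : ∀ w : W, w ∈ prW ↔ ∃ v : V, (v, w) ∈ Γ := by
    intro w
    rw [hprWdef]
    constructor
    · rintro ⟨p, hp, rfl⟩; exact ⟨p.1, hp⟩
    · rintro ⟨v, hv⟩; exact ⟨(v, w), hv, rfl⟩
  set prV : Submodule ℝ V := Γ.map (LinearMap.fst ℝ V W) with hprVdef
  have hprVmem : ∀ v : V, v ∈ prV ↔ ∃ w : W, (v, w) ∈ Γ := by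
    intro v
    rw [hprVdef]
    constructor
    · rintro ⟨p, hp, rfl⟩; exact ⟨p.2, hp⟩
    · rintro ⟨w, hw⟩; exact ⟨(v, w), hw, rfl⟩
  have hKorth : K = symplOrth ωW prW := by
    ext w
    rw [hKmem, mem_symplOrth]
    constructor
    · intro h0w s hs
      obtain ⟨v, hv⟩ := (hprWmem s).mp hs
      have := hLag (v, s) hv ((0 : V), w) h0w
      simpa using this.symm
    · intro h
      apply hmem
      intro q hq
      have : ωW q.2 w = 0 := h q.2 ((hprWmem q.2).mpr ⟨q.1, hq⟩)
      simpa using this.symm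
  have hprW : symplOrth ωW K = prW := by
    rw [hKorth, symplOrth_symplOrth haltW hndW]
  have hKVorth : KV = symplOrth ωV prV := by
    ext v
    rw [hKVmem, mem_symplOrth]
    constructor
    · intro h0v s hs
      obtain ⟨w, hw⟩ := (hprVmem s).mp hs
      have := hLag (s, w) hw (v, (0 : W)) h0v
      simpa using this
    · intro h
      apply hmem
      intro q hq
      have : ωV q.1 v = 0 := h q.1 ((hprVmem q.1).mpr ⟨q.2, hq⟩)
      simpa using this
  have hprV : symplOrth ωV KV = prV := by
    rw [hKVorth, symplOrth_symplOrth haltV hndV]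
  -- Part 1
  have hU1M : U1 ≤ M := by
    intro u hu
    rw [hM]
    have hu' := hu
    rw [hU1] at hu'
    obtain ⟨huS, huK⟩ := hu'
    refine ⟨huS, ?_⟩
    intro u' hu'
    have hu'K : ((0 : V), u') ∈ Γ := by
      rw [hU1] at hu'; exact (hKmem u').mp hu'.2
    have := hLag ((0 : V), u') hu'K ((0 : V), u) ((hKmem u).mp huK)
    show ωW u u' = 0
    have h2 : ωW u' u = 0 := by simpa using this.symm
    rw [skew haltW, h2, neg_zero]
  have hSM : S ≤ M := by
    intro s hs
    rw [hM]
    refine ⟨hS hs, ?_⟩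
    intro u hu
    rw [hU1] at hu
    exact hu.1 s hs
  have hP1 : U1 ⊔ S ≤ M := sup_le hU1M hSM
  -- Part 2
  have hP2 : ∀ w ∈ M, ∀ w' ∈ U1 ⊔ S, ωW w w' = 0 := by
    intro w hw w' hw'
    obtain ⟨u, hu, s, hs, rfl⟩ := Submodule.mem_sup.mp hw'
    rw [hM] at hw
    obtain ⟨hwS, hwU⟩ := hw
    have h1 : ωW w u = 0 := hwU u hu
    have h2 : ωW w s = 0 := by
      have : ωW s w = 0 := hwS s hs
      rw [skew haltW, this, neg_zero]
    simp [map_add, h1, h2]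
  refine ⟨hP1, hP2, ?_⟩
  -- Part 3
  have hGSorth : GS ≤ symplOrth ωV GS := by
    intro v hv g hg
    rw [hGS] at hv hg
    obtain ⟨sv, hsv, hv⟩ := hv
    obtain ⟨sg, hsg, hg⟩ := hg
    have := hLag (g, sg) hg (v, sv) hv
    rw [this]
    exact hS hsv sg hsg
  -- the correspondence subspace
  set E : Submodule ℝ (V × W) := Γ ⊓ ((symplOrth ωV GS).prod M) with hE
  have hEmem : ∀ p : V × W, p ∈ E ↔ p ∈ Γ ∧ p.1 ∈ symplOrth ωV GS ∧ p.2 ∈ M := by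
    intro p; rw [hE]; simp [Submodule.mem_prod, and_assoc]
  set N : Submodule ℝ M := (U1 ⊔ S).comap M.subtype with hN
  set NG : Submodule ℝ (symplOrth ωV GS) := GS.comap (symplOrth ωV GS).subtype with hNG
  set fE : E →ₗ[ℝ] (symplOrth ωV GS) :=
    ((LinearMap.fst ℝ V W).comp E.subtype).codRestrict _ (fun e => ((hEmem e.1).mp e.2).2.1)
    with hfE
  set gE : E →ₗ[ℝ] M :=
    ((LinearMap.snd ℝ V W).comp E.subtype).codRestrict _ (fun e => ((hEmem e.1).mp e.2).2.2)
    with hgE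
  set fbar : E →ₗ[ℝ] ((symplOrth ωV GS) ⧸ NG) := NG.mkQ.comp fE with hfbar
  set gbar : E →ₗ[ℝ] (M ⧸ N) := N.mkQ.comp gE with hgbar
  have hfEval : ∀ e : E, ((fE e : V)) = (e : V × W).1 := fun e => rfl
  have hgEval : ∀ e : E, ((gE e : W)) = (e : V × W).2 := fun e => rfl
  -- surjectivity of gbar
  have hMle : M ≤ S ⊔ prW := by
    have hU1orth : symplOrth ωW U1 = S ⊔ prW := by
      rw [hU1, symplOrth_inf haltW hndW, symplOrth_symplOrth haltW hndW, hprW]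
    rw [← hU1orth, hM, symplOrth_flip haltW]
    exact inf_le_right
  have hgsurj : Function.Surjective gbar := by
    intro x
    obtain ⟨w, rfl⟩ := Submodule.Quotient.mk_surjective N x
    obtain ⟨a, ha, b, hb, hab⟩ := Submodule.mem_sup.mp (hMle w.2)
    obtain ⟨v, hv⟩ := (hprWmem b).mp hb
    have hbM : b ∈ M := by
      have : b = (w : W) - a := by rw [← hab]; abel
      rw [this]
      exact M.sub_mem w.2 (hSM ha)
    have hbS : b ∈ symplOrth ωW S := by
      rw [hM] at hbM; exact hbM.1
    have hvGS : v ∈ symplOrth ωV GS := by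
      intro g hg
      rw [hGS] at hg
      obtain ⟨sg, hsg, hg⟩ := hg
      have := hLag (g, sg) hg (v, b) hv
      rw [this]
      exact hbS sg hsg
    refine ⟨⟨(v, b), (hEmem (v, b)).mpr ⟨hv, hvGS, hbM⟩⟩, ?_⟩
    show Submodule.Quotient.mk (gE _) = Submodule.Quotient.mk w
    rw [Submodule.Quotient.eq]
    show ((⟨b, hbM⟩ : M) - w) ∈ N
    rw [hN, Submodule.mem_comap]
    show b - (w : W) ∈ U1 ⊔ S
    have : b - (w : W) = -a := by rw [← hab]; abel
    rw [this]
    exact Submodule.neg_mem _ (Submodule.mem_sup_right ha)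
  -- surjectivity of fbar
  have hfsurj : Function.Surjective fbar := by
    intro x
    obtain ⟨v, rfl⟩ := Submodule.Quotient.mk_surjective NG x
    have hvpr : (v : V) ∈ prV := by
      rw [← hprV]
      intro k hk
      have hkGS : k ∈ GS := by
        rw [hGS]; exact ⟨0, S.zero_mem, (hKVmem k).mp hk⟩
      exact v.2 k hkGS
    obtain ⟨w0, hw0⟩ := (hprVmem (v : V)).mp hvpr
    have hw0orth : w0 ∈ symplOrth ωW (S ⊓ prW) := by
      intro s hs
      obtain ⟨v', hv'⟩ := (hprWmem s).mp hs.2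
      have hv'GS : v' ∈ GS := by rw [hGS]; exact ⟨s, hs.1, hv'⟩
      have := hLag (v', s) hv' ((v : V), w0) hw0
      rw [← this]
      exact v.2 v' hv'GS
    have hsplit : symplOrth ωW (S ⊓ prW) = symplOrth ωW S ⊔ K := by
      rw [symplOrth_inf haltW hndW, ← hKorth]
    rw [hsplit] at hw0orth
    obtain ⟨a, ha, k, hk, hak⟩ := Submodule.mem_sup.mp hw0orth
    have hvaΓ : ((v : V), a) ∈ Γ := by
      have : ((v : V), a) = ((v : V), w0) - ((0 : V), k) := by
        rw [← hak]; ext <;> simp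
      rw [this]
      exact Γ.sub_mem hw0 ((hKmem k).mp hk)
    have haM : a ∈ M := by
      rw [hM]
      refine ⟨ha, ?_⟩
      intro u hu
      have huΓ : ((0 : V), u) ∈ Γ := by rw [hU1] at hu; exact (hKmem u).mp hu.2
      have := hLag ((v : V), a) hvaΓ ((0 : V), u) huΓ
      show ωW a u = 0
      simpa using this.symm
    refine ⟨⟨((v : V), a), (hEmem _).mpr ⟨hvaΓ, v.2, haM⟩⟩, ?_⟩
    rfl
  -- equality of kernels
  have hker : LinearMap.ker gbar = LinearMap.ker fbar := by
    ext e
    obtain ⟨heΓ, he1, he2⟩ := (hEmem e.1).mp e.2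
    have hl : e ∈ LinearMap.ker gbar ↔ (e : V × W).2 ∈ U1 ⊔ S := by
      rw [hgbar, LinearMap.mem_ker, LinearMap.comp_apply, Submodule.mkQ_apply,
        Submodule.Quotient.mk_eq_zero, hN, Submodule.mem_comap]
      rfl
    have hr : e ∈ LinearMap.ker fbar ↔ (e : V × W).1 ∈ GS := by
      rw [hfbar, LinearMap.mem_ker, LinearMap.comp_apply, Submodule.mkQ_apply,
        Submodule.Quotient.mk_eq_zero, hNG, Submodule.mem_comap]
      rfl
    rw [hl, hr]
    constructor
    · intro h
      obtain ⟨u, hu, s, hs, hus⟩ := Submodule.mem_sup.mp h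
      have huΓ : ((0 : V), u) ∈ Γ := by rw [hU1] at hu; exact (hKmem u).mp hu.2
      have : ((e : V × W).1, s) ∈ Γ := by
        have h2 : ((e : V × W).1, s) = (e : V × W) - ((0 : V), u) := by
          ext
          · simp
          · show s = (e : V × W).2 - u
            rw [← hus]; abel
        rw [h2]
        exact Γ.sub_mem heΓ huΓ
      rw [hGS]
      exact ⟨s, hs, this⟩
    · intro h
      rw [hGS] at h
      obtain ⟨s, hs, hΓ'⟩ := h
      have hd : ((0 : V), (e : V × W).2 - s) ∈ Γ := by
        have h2 : ((0 : V), (e : V × W).2 - s) = (e : V × W) - ((e : V × W).1, s) := by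
          ext <;> simp
        rw [h2]
        exact Γ.sub_mem heΓ hΓ'
      have hdU1 : (e : V × W).2 - s ∈ U1 := by
        rw [hU1]
        refine ⟨?_, (hKmem _).mpr hd⟩
        have : (e : V × W).2 ∈ symplOrth ωW S := by rw [hM] at he2; exact he2.1
        exact Submodule.sub_mem _ this (hS hs)
      have : (e : V × W).2 = ((e : V × W).2 - s) + s := by abel
      rw [this]
      exact Submodule.add_mem _ (Submodule.mem_sup_left hdU1) (Submodule.mem_sup_right hs)
  -- build the equivalence
  set e₁ : (E ⧸ LinearMap.ker gbar) ≃ₗ[ℝ] (M ⧸ N) :=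
    gbar.quotKerEquivOfSurjective hgsurj with he₁
  set e₂ : (E ⧸ LinearMap.ker fbar) ≃ₗ[ℝ] ((symplOrth ωV GS) ⧸ NG) :=
    fbar.quotKerEquivOfSurjective hfsurj with he₂
  set e₀ : (E ⧸ LinearMap.ker gbar) ≃ₗ[ℝ] (E ⧸ LinearMap.ker fbar) :=
    Submodule.quotEquivOfEq _ _ hker with he₀
  refine ⟨e₁.symm.trans (e₀.trans e₂), ?_⟩
  have happly1 : ∀ e : E, e₁ (Submodule.Quotient.mk e) = gbar e := fun e => rfl
  have happly2 : ∀ e : E, e₂ (Submodule.Quotient.mk e) = fbar e := fun e => rfl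
  have happly0 : ∀ e : E, e₀ (Submodule.Quotient.mk e) = Submodule.Quotient.mk e :=
    fun e => rfl
  have hT : ∀ e : E, (e₁.symm.trans (e₀.trans e₂)) (gbar e) = fbar e := by
    intro e
    have h1 : e₁.symm (gbar e) = Submodule.Quotient.mk e := by
      rw [← happly1 e, LinearEquiv.symm_apply_apply]
    simp only [LinearEquiv.trans_apply, h1, happly0, happly2]
  intro w w' v v' hTw hTw'
  obtain ⟨e, he⟩ := hgsurj (Submodule.Quotient.mk w)
  obtain ⟨e', he'⟩ := hgsurj (Submodule.Quotient.mk w')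
  have hv : Submodule.Quotient.mk (p := NG) v = fbar e := by
    rw [← hTw, ← he, hT]
  have hv' : Submodule.Quotient.mk (p := NG) v' = fbar e' := by
    rw [← hTw', ← he', hT]
  -- extract membership facts
  obtain ⟨heΓ, he1, he2⟩ := (hEmem e.1).mp e.2
  obtain ⟨he'Γ, he'1, he'2⟩ := (hEmem e'.1).mp e'.2
  have hvdiff : (v : V) - (e : V × W).1 ∈ GS := by
    have := (Submodule.Quotient.eq NG).mp hv
    rw [hNG, Submodule.mem_comap] at this
    exact this
  have hv'diff : (v' : V) - (e' : V × W).1 ∈ GS := by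
    have := (Submodule.Quotient.eq NG).mp hv'
    rw [hNG, Submodule.mem_comap] at this
    exact this
  have hwdiff : (e : V × W).2 - (w : W) ∈ U1 ⊔ S := by
    have := (Submodule.Quotient.eq N).mp he
    rw [hN, Submodule.mem_comap] at this
    exact this
  have hw'diff : (e' : V × W).2 - (w' : W) ∈ U1 ⊔ S := by
    have := (Submodule.Quotient.eq N).mp he'
    rw [hN, Submodule.mem_comap] at this
    exact this
  -- now compute
  have hWeq : ωW (w : W) (w' : W) = ωW (e : V × W).2 (e' : V × W).2 := by
    set d := (e : V × W).2 - (w : W) with hd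
    set d' := (e' : V × W).2 - (w' : W) with hd'
    have hw1 : (w : W) = (e : V × W).2 - d := by rw [hd]; abel
    have hw1' : (w' : W) = (e' : V × W).2 - d' := by rw [hd']; abel
    have h1 : ωW (e : V × W).2 d' = 0 := hP2 _ he2 _ hw'diff
    have h2 : ωW d (e' : V × W).2 = 0 := by
      rw [skew haltW]
      rw [hP2 _ he'2 _ hwdiff, neg_zero]
    have h3 : ωW d d' = 0 := by
      rw [skew haltW]
      rw [hP2 _ (hP1 hw'diff) _ hwdiff, neg_zero]
    rw [hw1, hw1']
    simp only [map_sub, LinearMap.sub_apply, h1, h2, h3]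
    ring
  have hVeq : ωV (v : V) (v' : V) = ωV (e : V × W).1 (e' : V × W).1 := by
    set g := (v : V) - (e : V × W).1 with hg
    set g' := (v' : V) - (e' : V × W).1 with hg'
    have hv1 : (v : V) = (e : V × W).1 + g := by rw [hg]; abel
    have hv1' : (v' : V) = (e' : V × W).1 + g' := by rw [hg']; abel
    have h1 : ωV (e : V × W).1 g' = 0 := by
      rw [skew haltV, he1 g' hv'diff, neg_zero]
    have h2 : ωV g (e' : V × W).1 = 0 := he'1 g hvdiff
    have h3 : ωV g g' = 0 := hGSorth hv'diff g hvdiff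
    rw [hv1, hv1']
    simp only [map_add, LinearMap.add_apply, h1, h2, h3]
    ring
  rw [hWeq, hVeq]
  exact (hLag _ heΓ _ he'Γ).symm
end

section
/- For every real N > 0 and every c ∈ (0,1): ∫₀^c e^{−Ns} s^N ds ≤ c · e^{−N} · e^{−N(1−c)²/2}. -/
lemma stmt8_deriv (x : ℝ) :
    HasDerivAt (fun y : ℝ => Real.exp (-y - y ^ 2 / 2) + y)
      (Real.exp (-x - x ^ 2 / 2) * (-1 - x) + 1) x := by
  have hpoly : HasDerivAt (fun y : ℝ => -y - y ^ 2 / 2) (-1 - x) x := by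
    have h := ((hasDerivAt_id x).neg.sub ((hasDerivAt_pow 2 x).div_const 2))
    convert h using 1
    · rfl
    · rfl
    · rfl
    · simp
  exact hpoly.exp.add (hasDerivAt_id x)

/-- Key inequality: `1 - x ≤ exp (-x - x²/2)` for `x ∈ [0,1]`. -/
lemma stmt8_key (x : ℝ) (hx0 : 0 ≤ x) (hx1 : x ≤ 1) :
    1 - x ≤ Real.exp (-x - x ^ 2 / 2) := by
  set f : ℝ → ℝ := fun y => Real.exp (-y - y ^ 2 / 2) + y with hf
  have hmono : MonotoneOn f (Set.Icc (0 : ℝ) 1) := by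
    apply monotoneOn_of_deriv_nonneg (convex_Icc 0 1)
    · exact fun y _ => ((stmt8_deriv y).continuousAt).continuousWithinAt
    · exact fun y _ => (stmt8_deriv y).differentiableAt.differentiableWithinAt
    · intro y hy
      rw [interior_Icc] at hy
      rw [(stmt8_deriv y).deriv]
      have h1 : 1 + y ≤ Real.exp y := by
        have := Real.add_one_le_exp y; linarith
      have h2 : Real.exp y ≤ Real.exp (y + y ^ 2 / 2) :=
        Real.exp_le_exp.mpr (by nlinarith [sq_nonneg y])
      have h3 : Real.exp (-y - y ^ 2 / 2) * Real.exp (y + y ^ 2 / 2) = 1 := by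
        rw [← Real.exp_add]; ring_nf; exact Real.exp_zero
      have h4 : (1 + y) * Real.exp (-y - y ^ 2 / 2) ≤ 1 := by
        have he := Real.exp_pos (-y - y ^ 2 / 2)
        calc (1 + y) * Real.exp (-y - y ^ 2 / 2)
            ≤ Real.exp (y + y ^ 2 / 2) * Real.exp (-y - y ^ 2 / 2) :=
              mul_le_mul_of_nonneg_right (le_trans h1 h2) he.le
          _ = 1 := by rw [mul_comm]; exact h3
      nlinarith [h4]
  have h0 : f 0 ≤ f x := hmono (by constructor <;> norm_num) ⟨hx0, hx1⟩ hx0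
  have hf0 : f 0 = 1 := by simp [hf]
  have hfx : f x = Real.exp (-x - x ^ 2 / 2) + x := rfl
  rw [hf0, hfx] at h0
  linarith

/-- For real `N > 0` and `c ∈ (0,1)`:
`∫₀^c e^{−Ns} s^N ds ≤ c e^{−N} e^{−N(1−c)²/2}`. -/
theorem stmt8 (N : ℝ) (hN : 0 < N) (c : ℝ) (hc : c ∈ Set.Ioo (0 : ℝ) 1) :
    ∫ s in (0:ℝ)..c, Real.exp (-N * s) * s ^ N ≤
      c * Real.exp (-N) * Real.exp (-N * (1 - c) ^ 2 / 2) := by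
  obtain ⟨hc0, hc1⟩ := hc
  set C : ℝ := Real.exp (-N) * Real.exp (-N * (1 - c) ^ 2 / 2) with hC
  -- Step B : exp (-c) * c ≤ exp (-1 - (1-c)^2/2)
  have hB : Real.exp (-c) * c ≤ Real.exp (-1 - (1 - c) ^ 2 / 2) := by
    have hkey : c ≤ Real.exp (-(1 - c) - (1 - c) ^ 2 / 2) := by
      have := stmt8_key (1 - c) (by linarith) (by linarith)
      linarith [this]
    have : Real.exp (-c) * c ≤ Real.exp (-c) * Real.exp (-(1 - c) - (1 - c) ^ 2 / 2) :=
      mul_le_mul_of_nonneg_left hkey (Real.exp_nonneg _)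
    calc Real.exp (-c) * c ≤ Real.exp (-c) * Real.exp (-(1 - c) - (1 - c) ^ 2 / 2) := this
      _ = Real.exp (-1 - (1 - c) ^ 2 / 2) := by rw [← Real.exp_add]; ring_nf
  -- Step A : for 0 < s ≤ c, exp (-s) * s ≤ exp (-c) * c
  have hA : ∀ s : ℝ, 0 < s → s ≤ c → Real.exp (-s) * s ≤ Real.exp (-c) * c := by
    intro s hs0 hsc
    have hd0 : 0 ≤ c - s := by linarith
    have hd1 : c - s < 1 := by linarith
    have h1 : 1 - (c - s) ≤ Real.exp (-(c - s)) := by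
      have := Real.add_one_le_exp (-(c - s)); linarith
    have h2 : Real.exp (c - s) * (1 - (c - s)) ≤ 1 := by
      have := mul_le_mul_of_nonneg_left h1 (Real.exp_nonneg (c - s))
      calc Real.exp (c - s) * (1 - (c - s)) ≤ Real.exp (c - s) * Real.exp (-(c - s)) := this
        _ = 1 := by rw [← Real.exp_add]; simp
    have h3 : s * Real.exp (c - s) ≤ c := by
      nlinarith [Real.exp_pos (c - s), mul_le_mul_of_nonneg_left h2 hs0.le]
    have h4 : Real.exp (-c) * (s * Real.exp (c - s)) ≤ Real.exp (-c) * c :=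
      mul_le_mul_of_nonneg_left h3 (Real.exp_nonneg _)
    have he : Real.exp (-s) = Real.exp (-c) * Real.exp (c - s) := by
      rw [← Real.exp_add]; ring_nf
    calc Real.exp (-s) * s = Real.exp (-c) * (s * Real.exp (c - s)) := by rw [he]; ring
      _ ≤ Real.exp (-c) * c := h4
  -- pointwise bound on the integrand
  have hbound : ∀ s ∈ Set.uIoc (0 : ℝ) c, ‖Real.exp (-N * s) * s ^ N‖ ≤ C := by
    intro s hs
    rw [Set.uIoc_of_le hc0.le] at hs
    obtain ⟨hs0, hsc⟩ := hs
    have hval : Real.exp (-N * s) * s ^ N = (Real.exp (-s) * s) ^ N := by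
      rw [Real.mul_rpow (Real.exp_nonneg _) hs0.le, ← Real.exp_mul]
      ring_nf
    have hnn : 0 ≤ Real.exp (-N * s) * s ^ N := by positivity
    rw [Real.norm_eq_abs, abs_of_nonneg hnn, hval]
    have hle : Real.exp (-s) * s ≤ Real.exp (-1 - (1 - c) ^ 2 / 2) :=
      le_trans (hA s hs0 hsc) hB
    have := Real.rpow_le_rpow (by positivity) hle hN.le
    calc (Real.exp (-s) * s) ^ N ≤ Real.exp (-1 - (1 - c) ^ 2 / 2) ^ N := this
      _ = Real.exp ((-1 - (1 - c) ^ 2 / 2) * N) := (Real.exp_mul _ _).symm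
      _ = C := by rw [hC, ← Real.exp_add]; ring_nf
  have hnorm := intervalIntegral.norm_integral_le_of_norm_le_const hbound
  calc ∫ s in (0:ℝ)..c, Real.exp (-N * s) * s ^ N
      ≤ ‖∫ s in (0:ℝ)..c, Real.exp (-N * s) * s ^ N‖ := le_abs_self _
    _ ≤ C * |c - 0| := hnorm
    _ = c * Real.exp (-N) * Real.exp (-N * (1 - c) ^ 2 / 2) := by
        rw [sub_zero, abs_of_pos hc0, hC]; ring
end

section
/- For every ε ∈ (0,1) there exist constants C > 0 and a > 0 such that for every integer N ≥ 1 and every f ∈ ℬ_N: ∫_{|z|<1−ε} |Θ_N^⊥ f(z)|² e^{−N|z|²} dx dy ≤ C · ‖f‖² · N^{3/2} · e^{−aN}. -/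
open MeasureTheory ComplexConjugate

/-- The `k`-th Taylor coefficient at `0` of an entire function. -/
noncomputable def taylorCoeff (f : ℂ → ℂ) (k : ℕ) : ℂ :=
  iteratedDeriv k f 0 / (k.factorial : ℂ)

/-- `Θ_N f`: truncation of the Taylor series of `f` at degree `N`. -/
noncomputable def thetaTrunc (N : ℕ) (f : ℂ → ℂ) (z : ℂ) : ℂ :=
  ∑ k ∈ Finset.range (N + 1), taylorCoeff f k * z ^ k

/-- The squared Bargmann norm `‖f‖² = (1/π)∫_ℂ |f(z)|² e^{−N|z|²} dx dy`. -/
noncomputable def bnormSq (N : ℕ) (f : ℂ → ℂ) : ℝ :=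
  (1 / Real.pi) * ∫ z : ℂ, ‖f z‖ ^ 2 * Real.exp (-(N : ℝ) * ‖z‖ ^ 2)

/-- Membership in the Bargmann space `ℬ_N`: entire with finite Bargmann norm. -/
def memBargmann (N : ℕ) (f : ℂ → ℂ) : Prop :=
  Differentiable ℂ f ∧
    Integrable (fun z : ℂ => ‖f z‖ ^ 2 * Real.exp (-(N : ℝ) * ‖z‖ ^ 2))

/-- The coherent state `φ_w(z) = N e^{N z conj w}` in the Bargmann space `ℬ_N`. -/
noncomputable def cohState (N : ℕ) (w z : ℂ) : ℂ :=
  (N : ℂ) * Complex.exp ((N : ℂ) * z * conj w)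

section Proofs
open MeasureTheory Real
open scoped ENNReal NNReal

lemma hasSum_taylor {f : ℂ → ℂ} (hf : Differentiable ℂ f) (z : ℂ) :
    HasSum (fun k : ℕ => taylorCoeff f k * z ^ k) (f z) := by
  have h := Complex.hasSum_taylorSeries_of_entire hf 0 z
  simpa [taylorCoeff, div_mul_eq_mul_div, smul_eq_mul, sub_zero, mul_comm, mul_left_comm,
    div_eq_inv_mul, mul_assoc] using h

set_option maxHeartbeats 800000 in
lemma summable_norm_taylor {f : ℂ → ℂ} (hf : Differentiable ℂ f) {ρ : ℝ} (hρ : 0 ≤ ρ) :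
    Summable (fun k : ℕ => ‖taylorCoeff f k‖ * ρ ^ k) := by
  have hw0 : (0:ℝ) < 2 * ρ + 1 := by positivity
  set w : ℝ := 2 * ρ + 1 with hw
  have hsum := (hasSum_taylor hf (w : ℂ)).summable
  have htend : Filter.Tendsto (fun k : ℕ => ‖taylorCoeff f k * (w : ℂ) ^ k‖)
      Filter.atTop (nhds 0) := by
    simpa using (hsum.tendsto_atTop_zero.norm)
  obtain ⟨C, hC⟩ := htend.bddAbove_range
  have hCb : ∀ k : ℕ, ‖taylorCoeff f k‖ * w ^ k ≤ C := by
    intro k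
    have h2 := hC (Set.mem_range_self k)
    simpa [norm_mul, norm_pow, Complex.norm_real, abs_of_pos hw0] using h2
  have hC0 : 0 ≤ C := le_trans (by positivity) (hCb 0)
  refine Summable.of_nonneg_of_le (fun k => by positivity) ?_
    ((summable_geometric_of_lt_one (r := (1/2:ℝ)) (by norm_num) (by norm_num)).mul_left C)
  · intro k
    have hρw : ρ ≤ w / 2 := by rw [hw]; linarith
    have h1 : ρ ^ k ≤ (w / 2) ^ k := pow_le_pow_left₀ hρ hρw k
    calc ‖taylorCoeff f k‖ * ρ ^ k
        ≤ ‖taylorCoeff f k‖ * (w / 2) ^ k := by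
          exact mul_le_mul_of_nonneg_left h1 (norm_nonneg _)
      _ = (‖taylorCoeff f k‖ * w ^ k) * (1/2) ^ k := by
          rw [div_pow, one_div_pow, mul_one_div, mul_div_assoc]
      _ ≤ C * (1/2) ^ k := mul_le_mul_of_nonneg_right (hCb k) (by positivity)

lemma exp_ortho {m : ℝ} (hm : ∃ n : ℤ, m = n) (hm0 : m ≠ 0) :
    ∫ θ in Set.Ioo (-π) π, Complex.exp ((m * θ : ℝ) * Complex.I) = 0 := by
  obtain ⟨n, rfl⟩ := hm
  have hc : ((n:ℝ) : ℂ) * Complex.I ≠ 0 := by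
    simp only [ne_eq, mul_eq_zero, Complex.I_ne_zero, or_false, Complex.ofReal_eq_zero]
    exact_mod_cast fun h => hm0 (by exact_mod_cast h)
  have h1 : (∫ θ in Set.Ioo (-π) π, Complex.exp (((n:ℝ) * θ : ℝ) * Complex.I))
      = ∫ θ in (-π)..π, Complex.exp ((((n:ℝ):ℂ) * Complex.I) * (θ:ℝ)) := by
    rw [intervalIntegral.integral_of_le (by linarith [pi_pos]),
      ← MeasureTheory.integral_Ioc_eq_integral_Ioo]
    congr 1; funext θ; push_cast; ring_nf
  rw [h1, integral_exp_mul_complex hc]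
  have h2 : Complex.exp (((n:ℝ):ℂ) * Complex.I * (π:ℝ)) =
      Complex.exp (((n:ℝ):ℂ) * Complex.I * ((-π:ℝ):ℂ)) := by
    rw [show ((n:ℝ):ℂ) * Complex.I * ((-π:ℝ):ℂ) = ((n:ℝ):ℂ) * Complex.I * (π:ℝ)
        - (n:ℤ) * (2 * (π:ℂ) * Complex.I) by push_cast; ring, Complex.exp_sub,
      Complex.exp_int_mul_two_pi_mul_I, div_one]
  rw [h2, sub_self, zero_div]

lemma exp_ortho_zero : (∫ _ in Set.Ioo (-π) π, (1:ℂ)) = ((2 * π : ℝ) : ℂ) := by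
  rw [MeasureTheory.setIntegral_const, measureReal_def, Real.volume_Ioo, Complex.real_smul, mul_one,
    show π - -π = 2*π by ring, ENNReal.toReal_ofReal (by positivity)]

lemma circleFourier {f : ℂ → ℂ} (hf : Differentiable ℂ f) {r : ℝ} (hr : 0 < r) (k : ℕ) :
    ∫ θ in Set.Ioo (-π) π,
        f (r * Complex.exp (θ * Complex.I)) * Complex.exp ((-(k:ℝ) * θ : ℝ) * Complex.I)
      = ((2 * π : ℝ) : ℂ) * (taylorCoeff f k * (r:ℂ) ^ k) := by
  set a : ℕ → ℂ := taylorCoeff f with ha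
  set g : ℕ → ℝ → ℂ := fun j θ => a j * (r:ℂ) ^ j *
    Complex.exp (((((j:ℝ) - k) * θ : ℝ)) * Complex.I) with hg
  have hpt : ∀ θ : ℝ, f (r * Complex.exp (θ * Complex.I)) *
      Complex.exp ((-(k:ℝ) * θ : ℝ) * Complex.I) = ∑' j, g j θ := by
    intro θ
    have h := (hasSum_taylor hf ((r:ℝ) * Complex.exp (θ * Complex.I))).mul_right
      (Complex.exp ((-(k:ℝ) * θ : ℝ) * Complex.I))
    have heq : (fun j : ℕ => a j * ((r:ℂ) * Complex.exp (θ * Complex.I)) ^ j *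
        Complex.exp ((-(k:ℝ) * θ : ℝ) * Complex.I)) = fun j => g j θ := by
      funext j
      have hX : ((j:ℂ)) * ((θ:ℂ) * Complex.I) + ((-(k:ℝ) * θ : ℝ) : ℂ) * Complex.I
          = ((((j:ℝ) - k) * θ : ℝ) : ℂ) * Complex.I := by push_cast; ring
      calc a j * ((r:ℂ) * Complex.exp (θ * Complex.I)) ^ j *
            Complex.exp ((-(k:ℝ) * θ : ℝ) * Complex.I)
          = a j * (r:ℂ) ^ j * (Complex.exp ((θ:ℂ) * Complex.I) ^ j *
            Complex.exp ((-(k:ℝ) * θ : ℝ) * Complex.I)) := by ring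
        _ = a j * (r:ℂ) ^ j * Complex.exp (((j:ℂ)) * ((θ:ℂ) * Complex.I) +
            ((-(k:ℝ) * θ : ℝ) : ℂ) * Complex.I) := by
            rw [← Complex.exp_nat_mul, ← Complex.exp_add]
        _ = g j θ := by rw [hX, hg]
    rw [heq] at h
    exact h.tsum_eq.symm
  have hnorm : ∀ j θ, ‖g j θ‖ = ‖a j‖ * r ^ j := by
    intro j θ
    rw [hg]
    simp only [norm_mul, norm_pow, Complex.norm_real, Real.norm_eq_abs,
      Complex.norm_exp_ofReal_mul_I, mul_one, abs_of_pos hr]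
  have hmeas : ∀ j : ℕ, AEStronglyMeasurable (g j) (volume.restrict (Set.Ioo (-π) π)) := by
    intro j
    apply Continuous.aestronglyMeasurable
    fun_prop
  have hsum : ∑' j, ∫⁻ θ in Set.Ioo (-π) π, ‖g j θ‖₊ ≠ ⊤ := by
    have hv : (volume (Set.Ioo (-π) π)) = ENNReal.ofReal (2*π) := by
      rw [Real.volume_Ioo]; congr 1; ring
    have h1 : ∀ j : ℕ, (∫⁻ θ in Set.Ioo (-π) π, (‖g j θ‖₊ : ℝ≥0∞)) =
        ENNReal.ofReal (‖a j‖ * r ^ j) * ENNReal.ofReal (2*π) := by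
      intro j
      have hfun : (fun θ => (‖g j θ‖₊ : ℝ≥0∞)) = fun _ => ENNReal.ofReal (‖a j‖ * r ^ j) := by
        funext θ; rw [← enorm_eq_nnnorm, ← ofReal_norm_eq_enorm, hnorm]
      rw [hfun, MeasureTheory.lintegral_const, Measure.restrict_apply MeasurableSet.univ,
        Set.univ_inter, hv]
    have h2 : ∑' j, ∫⁻ θ in Set.Ioo (-π) π, (‖g j θ‖₊ : ℝ≥0∞) =
        (∑' j, ENNReal.ofReal (‖a j‖ * r ^ j)) * ENNReal.ofReal (2*π) := by
      rw [← ENNReal.tsum_mul_right]; exact tsum_congr h1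
    rw [h2, ← ENNReal.ofReal_tsum_of_nonneg (fun j => by positivity)
      (summable_norm_taylor hf hr.le)]
    exact ENNReal.mul_ne_top ENNReal.ofReal_ne_top ENNReal.ofReal_ne_top
  calc ∫ θ in Set.Ioo (-π) π,
        f (r * Complex.exp (θ * Complex.I)) * Complex.exp ((-(k:ℝ) * θ : ℝ) * Complex.I)
      = ∫ θ in Set.Ioo (-π) π, ∑' j, g j θ := by
        apply integral_congr_ae; filter_upwards with θ; exact hpt θ
    _ = ∑' j, ∫ θ in Set.Ioo (-π) π, g j θ := integral_tsum hmeas hsum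
    _ = ((2 * π : ℝ) : ℂ) * (taylorCoeff f k * (r:ℂ) ^ k) := by
        rw [tsum_eq_single k]
        · rw [hg]
          simp only
          rw [MeasureTheory.integral_const_mul,
            show (fun θ : ℝ => Complex.exp (((((k:ℝ) - k) * θ : ℝ)) * Complex.I))
              = fun _ : ℝ => (1:ℂ) by funext θ; norm_num,
            exp_ortho_zero]
          rw [ha]; ring
        · intro j hj
          rw [hg]
          simp only
          rw [MeasureTheory.integral_const_mul, exp_ortho ⟨(j:ℤ) - k, by push_cast; ring⟩
            (by simp only [sub_ne_zero]; exact_mod_cast fun h => hj (by exact_mod_cast h)),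
            mul_zero]

lemma circle_sq {f : ℂ → ℂ} (hf : Differentiable ℂ f) {r : ℝ} (hr : 0 < r) (k : ℕ) :
    2 * π * (‖taylorCoeff f k‖ * r ^ k) ^ 2 ≤
      ∫ θ in Set.Ioo (-π) π, ‖f (r * Complex.exp (θ * Complex.I))‖ ^ 2 := by
  have hπ : 0 < π := pi_pos
  set g : ℝ → ℂ := fun θ =>
    f (r * Complex.exp (θ * Complex.I)) * Complex.exp ((-(k:ℝ) * θ : ℝ) * Complex.I) with hgdef
  have hgc : Continuous g := by have := hf.continuous; fun_prop
  set h : ℝ → ℝ := fun θ => ‖g θ‖ with hhdef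
  have hhc : Continuous h := hgc.norm
  have hInt1 : IntegrableOn h (Set.Ioo (-π) π) :=
    (hhc.integrableOn_Icc).mono_set Set.Ioo_subset_Icc_self
  have hInt2 : IntegrableOn (fun θ => h θ ^ 2) (Set.Ioo (-π) π) :=
    ((hhc.pow 2).integrableOn_Icc).mono_set Set.Ioo_subset_Icc_self
  set S : ℝ := ∫ θ in Set.Ioo (-π) π, h θ with hSdef
  have hS0 : 0 ≤ S := integral_nonneg fun θ => norm_nonneg _
  have hnormint : 2 * π * (‖taylorCoeff f k‖ * r ^ k) ≤ S := by
    have h1 : ‖∫ θ in Set.Ioo (-π) π, g θ‖ ≤ S := norm_integral_le_integral_norm g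
    have h2 : ‖∫ θ in Set.Ioo (-π) π, g θ‖ = 2 * π * (‖taylorCoeff f k‖ * r ^ k) := by
      rw [hgdef, circleFourier hf hr k]
      simp only [norm_mul, Complex.norm_real, Real.norm_eq_abs, abs_two, abs_of_pos hπ,
        norm_pow, abs_of_pos hr]
    linarith [h2 ▸ h1]
  have hvol : (volume (Set.Ioo (-π) π)).toReal = 2 * π := by
    rw [Real.volume_Ioo, show π - -π = 2*π by ring, ENNReal.toReal_ofReal (by positivity)]
  -- Cauchy-Schwarz : S^2 ≤ 2π ∫ h²
  have hCS : S ^ 2 ≤ 2 * π * ∫ θ in Set.Ioo (-π) π, h θ ^ 2 := by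
    set c : ℝ := S / (2 * π) with hcdef
    have hnn : 0 ≤ ∫ θ in Set.Ioo (-π) π, (h θ - c) ^ 2 :=
      integral_nonneg fun θ => sq_nonneg _
    have hexp : (∫ θ in Set.Ioo (-π) π, (h θ - c) ^ 2)
        = (∫ θ in Set.Ioo (-π) π, h θ ^ 2) - 2 * c * S + c ^ 2 * (2 * π) := by
      have e0 : (fun θ => (h θ - c) ^ 2)
          = fun θ => h θ ^ 2 - (2 * c) * h θ + c ^ 2 := by funext θ; ring
      rw [e0]
      have i1 : IntegrableOn (fun θ => h θ ^ 2 - 2 * c * h θ) (Set.Ioo (-π) π) :=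
        hInt2.sub (hInt1.const_mul (2*c))
      have i2 : IntegrableOn (fun _ : ℝ => c ^ 2) (Set.Ioo (-π) π) :=
        (integrableOn_const_iff (by finiteness)).mpr (Or.inr (by rw [Real.volume_Ioo]; exact ENNReal.ofReal_lt_top))
      rw [integral_add i1 i2, integral_sub hInt2 (hInt1.const_mul (2*c)), MeasureTheory.integral_const_mul,
        setIntegral_const, smul_eq_mul, measureReal_def, hvol, ← hSdef]
      ring
    have h2π : (0:ℝ) < 2 * π := by positivity
    have hq := hexp ▸ hnn
    have h3 : c * (2*π) = S := by rw [hcdef]; field_simp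
    nlinarith [hq, h3, h2π]
  have hfin : (2 * π * (‖taylorCoeff f k‖ * r ^ k)) ^ 2 ≤
      2 * π * ∫ θ in Set.Ioo (-π) π, h θ ^ 2 := by
    calc (2 * π * (‖taylorCoeff f k‖ * r ^ k)) ^ 2 ≤ S ^ 2 := by
          apply pow_le_pow_left₀ (by positivity) hnormint
      _ ≤ _ := hCS
  have hid : (∫ θ in Set.Ioo (-π) π, h θ ^ 2)
      = ∫ θ in Set.Ioo (-π) π, ‖f (r * Complex.exp (θ * Complex.I))‖ ^ 2 := by
    apply integral_congr_ae; filter_upwards with θ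
    rw [hhdef, hgdef]
    simp only [norm_mul, Complex.norm_exp_ofReal_mul_I, mul_one]
  rw [← hid]
  have h2π : (0:ℝ) < 2 * π := by positivity
  nlinarith [hfin, sq_nonneg (‖taylorCoeff f k‖ * r ^ k)]

lemma polar_symm_eq (p : ℝ × ℝ) :
    Complex.polarCoord.symm p = (p.1 : ℂ) * Complex.exp (p.2 * Complex.I) := by
  rw [Complex.polarCoord_symm_apply, Complex.exp_mul_I]
  push_cast
  ring

lemma integrableOn_polar (F : ℂ → ℝ) (hF : Integrable F) :
    IntegrableOn (fun p : ℝ × ℝ => p.1 • F (Complex.polarCoord.symm p)) polarCoord.target := by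
  have hG : Integrable (fun p : ℝ × ℝ => F (Complex.measurableEquivRealProd.symm p)) := by
    exact ((Complex.volume_preserving_equiv_real_prod.symm _).integrable_comp_emb
      (MeasurableEquiv.measurableEmbedding _)).mpr hF
  set B : ℝ × ℝ → ℝ × ℝ →L[ℝ] ℝ × ℝ := fun p =>
    LinearMap.toContinuousLinearMap (Matrix.toLin (Module.Basis.finTwoProd ℝ) (Module.Basis.finTwoProd ℝ)
      !![Real.cos p.2, -p.1 * Real.sin p.2; Real.sin p.2, p.1 * Real.cos p.2]) with hB
  have hBdet : ∀ p, (B p).det = p.1 := by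
    intro p
    conv_rhs => rw [← one_mul p.1, ← Real.cos_sq_add_sin_sq p.2]
    simp only [hB, neg_mul, LinearMap.det_toContinuousLinearMap, LinearMap.det_toLin,
      Matrix.det_fin_two_of, sub_neg_eq_add]
    ring
  have hderiv : ∀ p ∈ polarCoord.target,
      HasFDerivWithinAt polarCoord.symm (B p) polarCoord.target p :=
    fun p _ => (hasFDerivAt_polarCoord_symm p).hasFDerivWithinAt
  have hinj : Set.InjOn polarCoord.symm polarCoord.target := polarCoord.symm.injOn
  have himg : polarCoord.symm '' polarCoord.target = polarCoord.source :=
    polarCoord.symm_image_target_eq_source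
  have hiff := integrableOn_image_iff_integrableOn_abs_det_fderiv_smul volume
    polarCoord.open_target.measurableSet hderiv hinj
    (fun q => F (Complex.measurableEquivRealProd.symm q))
  rw [himg] at hiff
  have hsrc : IntegrableOn (fun q => F (Complex.measurableEquivRealProd.symm q))
      polarCoord.source := hG.integrableOn
  have hres := hiff.mp hsrc
  apply hres.congr_fun _ polarCoord.open_target.measurableSet
  intro p hp
  show |(B p).det| • F (Complex.measurableEquivRealProd.symm (polarCoord.symm p))
      = p.1 • F (Complex.polarCoord.symm p)
  rw [hBdet, abs_of_pos hp.1]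
  rfl

set_option maxHeartbeats 800000 in
lemma coeff_bound {N : ℕ} (hN : 1 ≤ N) {f : ℂ → ℂ} (hmem : memBargmann N f) (k : ℕ) :
    ‖taylorCoeff f k‖ ^ 2 * (k.factorial : ℝ) ≤ bnormSq N f * (N : ℝ) ^ (k + 1) := by
  obtain ⟨hf, hF⟩ := hmem
  set F : ℂ → ℝ := fun z => ‖f z‖ ^ 2 * Real.exp (-(N : ℝ) * ‖z‖ ^ 2) with hFdef
  set H : ℝ × ℝ → ℝ := fun p => p.1 • F (Complex.polarCoord.symm p) with hHdef
  set A : ℝ := ‖taylorCoeff f k‖ ^ 2 with hAdef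
  have hπ : (0:ℝ) < π := pi_pos
  have hN0 : (0:ℝ) < N := by exact_mod_cast hN
  have h1 : ∫ p in polarCoord.target, H p = ∫ z : ℂ, F z :=
    Complex.integral_comp_polarCoord_symm F
  have h2 : IntegrableOn H polarCoord.target := integrableOn_polar F hF
  rw [polarCoord_target] at h1 h2
  have hrr : (volume : Measure (ℝ × ℝ)).restrict (Set.Ioi (0:ℝ) ×ˢ Set.Ioo (-π) π)
      = (volume.restrict (Set.Ioi (0:ℝ))).prod (volume.restrict (Set.Ioo (-π) π)) := by
    rw [Measure.volume_eq_prod, Measure.prod_restrict]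
  have h2' : Integrable H ((volume.restrict (Set.Ioi (0:ℝ))).prod
      (volume.restrict (Set.Ioo (-π) π))) := by
    rw [← hrr]; exact h2
  have h4 : ∫ p in Set.Ioi (0:ℝ) ×ˢ Set.Ioo (-π) π, H p
      = ∫ r in Set.Ioi (0:ℝ), ∫ θ in Set.Ioo (-π) π, H (r, θ) := by
    rw [hrr]
    exact MeasureTheory.integral_prod H h2'
  have hHval : ∀ (r : ℝ), 0 < r → ∀ θ : ℝ, H (r, θ)
      = (r * Real.exp (-(N:ℝ) * r^2)) * ‖f ((r:ℂ) * Complex.exp ((θ:ℝ) * Complex.I))‖^2 := by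
    intro r hr θ
    have hnz : ‖(r:ℂ) * Complex.exp ((θ:ℝ) * Complex.I)‖ = r := by
      rw [norm_mul]
      simp only [Complex.norm_real, Complex.norm_exp_ofReal_mul_I, mul_one,
        Real.norm_eq_abs]
      exact abs_of_pos hr
    rw [hHdef]
    simp only [smul_eq_mul]
    rw [polar_symm_eq, hFdef]
    simp only
    rw [hnz]
    ring
  have hinner : ∀ r ∈ Set.Ioi (0:ℝ),
      2 * π * A * (r ^ (2*k+1) * Real.exp (-(N:ℝ) * r^2))
        ≤ ∫ θ in Set.Ioo (-π) π, H (r, θ) := by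
    intro r hr
    rw [Set.mem_Ioi] at hr
    have hc := circle_sq hf hr k
    have hpos : (0:ℝ) ≤ r * Real.exp (-(N:ℝ)*r^2) := by positivity
    have hsplit : (∫ θ in Set.Ioo (-π) π, H (r, θ))
        = (r * Real.exp (-(N:ℝ)*r^2)) *
          ∫ θ in Set.Ioo (-π) π, ‖f ((r:ℂ) * Complex.exp ((θ:ℝ) * Complex.I))‖^2 := by
      rw [← MeasureTheory.integral_const_mul]
      apply integral_congr_ae
      filter_upwards with θ
      exact hHval r hr θ
    rw [hsplit]
    have hexp : 2 * π * A * (r ^ (2*k+1) * Real.exp (-(N:ℝ) * r^2))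
        = (r * Real.exp (-(N:ℝ)*r^2)) * (2 * π * (‖taylorCoeff f k‖ * r ^ k)^2) := by
      rw [hAdef, pow_add, pow_mul]
      ring
    rw [hexp]
    exact mul_le_mul_of_nonneg_left hc hpos
  have hcast : (-1:ℝ) < ((2*k+1 : ℕ):ℝ) := by
    have : (0:ℝ) ≤ ((2*k+1 : ℕ):ℝ) := by positivity
    linarith
  have hint_low : IntegrableOn
      (fun r : ℝ => 2 * π * A * (r ^ (2*k+1) * Real.exp (-(N:ℝ) * r^2))) (Set.Ioi 0) := by
    have hbase := integrableOn_rpow_mul_exp_neg_mul_sq hN0 (s := ((2*k+1 : ℕ):ℝ)) hcast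
    simp_rw [Real.rpow_natCast] at hbase
    exact hbase.const_mul _
  have hint_up : IntegrableOn (fun r => ∫ θ in Set.Ioo (-π) π, H (r, θ)) (Set.Ioi 0) :=
    h2'.integral_prod_left
  have h8 : (∫ r in Set.Ioi (0:ℝ), 2 * π * A * (r ^ (2*k+1) * Real.exp (-(N:ℝ) * r^2)))
      ≤ ∫ r in Set.Ioi (0:ℝ), ∫ θ in Set.Ioo (-π) π, H (r, θ) :=
    setIntegral_mono_on hint_low hint_up measurableSet_Ioi hinner
  have hval : (∫ r in Set.Ioi (0:ℝ), r ^ (2*k+1) * Real.exp (-(N:ℝ) * r^2))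
      = (k.factorial : ℝ) / (2 * (N:ℝ) ^ (k+1)) := by
    have hI := integral_rpow_mul_exp_neg_mul_rpow (p := 2) (q := ((2*k+1 : ℕ):ℝ))
      (b := (N:ℝ)) (by norm_num) hcast hN0
    have e0 : (∫ r in Set.Ioi (0:ℝ), r ^ (2*k+1) * Real.exp (-(N:ℝ) * r^2))
        = ∫ x in Set.Ioi (0:ℝ), x ^ ((2*k+1 : ℕ):ℝ) * Real.exp (-(N:ℝ) * x ^ (2:ℝ)) := by
      refine setIntegral_congr_fun measurableSet_Ioi (fun x hx => ?_)
      rw [Real.rpow_natCast, Real.rpow_two]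
    rw [e0, hI]
    have e1 : (((2*k+1 : ℕ):ℝ) + 1) / 2 = ((k:ℕ):ℝ) + 1 := by push_cast; ring
    have e2 : -(((2*k+1 : ℕ):ℝ) + 1) / 2 = -(((k+1 : ℕ)):ℝ) := by push_cast; ring
    rw [e1, e2, Real.Gamma_nat_eq_factorial, Real.rpow_neg hN0.le, Real.rpow_natCast]
    field_simp
  have h9 : (∫ r in Set.Ioi (0:ℝ), 2 * π * A * (r ^ (2*k+1) * Real.exp (-(N:ℝ) * r^2)))
      = π * A * ((k.factorial : ℝ) / (N:ℝ) ^ (k+1)) := by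
    rw [MeasureTheory.integral_const_mul, hval]
    field_simp
  have h10 : π * bnormSq N f = ∫ z : ℂ, F z := by
    rw [bnormSq, hFdef]
    field_simp
  have hNp : (0:ℝ) < (N:ℝ) ^ (k+1) := by positivity
  have hfinal : π * A * ((k.factorial : ℝ) / (N:ℝ) ^ (k+1)) ≤ π * bnormSq N f := by
    rw [h10, ← h1, h4]
    rw [h9] at h8
    exact h8
  rw [hAdef] at hfinal
  have e3 : π * ‖taylorCoeff f k‖ ^ 2 * ((k.factorial:ℝ) / (N:ℝ)^(k+1))
      = π * (‖taylorCoeff f k‖ ^ 2 * (k.factorial:ℝ) / (N:ℝ)^(k+1)) := by ring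
  rw [e3] at hfinal
  have h11 := le_of_mul_le_mul_left hfinal hπ
  rw [div_le_iff₀ hNp] at h11
  exact h11

lemma bnormSq_nonneg (N : ℕ) (f : ℂ → ℂ) : 0 ≤ bnormSq N f := by
  apply mul_nonneg (by positivity)
  apply integral_nonneg
  intro z
  positivity

lemma pow_mul_exp_neg_mono {n : ℕ} {u v : ℝ} (hu : 0 ≤ u) (huv : u ≤ v) (hv : v ≤ n) :
    u ^ n * Real.exp (-u) ≤ v ^ n * Real.exp (-v) := by
  rcases eq_or_lt_of_le (hu.trans huv) with hv0 | hv0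
  · have hu0 : u = 0 := le_antisymm (huv.trans hv0.symm.le) hu
    rw [hu0, ← hv0]
  · set t : ℝ := u / v with htdef
    have ht0 : 0 ≤ t := div_nonneg hu hv0.le
    have ht1 : t ≤ 1 := by rw [htdef, div_le_one hv0]; exact huv
    have htv : u = t * v := by rw [htdef]; field_simp
    have h1 : t ≤ Real.exp (t - 1) := by
      have := Real.add_one_le_exp (t - 1); linarith
    have h2 : t ^ n ≤ Real.exp ((t - 1) * n) := by
      calc t ^ n ≤ Real.exp (t - 1) ^ n := pow_le_pow_left₀ ht0 h1 n
        _ = Real.exp ((t - 1) * n) := by rw [mul_comm, Real.exp_nat_mul]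
    have h3 : Real.exp ((t - 1) * n) ≤ Real.exp ((t - 1) * v) := by
      apply Real.exp_le_exp.2
      nlinarith
    calc u ^ n * Real.exp (-u) = t ^ n * (v ^ n * Real.exp (-(t * v))) := by
          rw [htv, mul_pow]; ring
      _ ≤ Real.exp ((t - 1) * v) * (v ^ n * Real.exp (-(t * v))) :=
          mul_le_mul_of_nonneg_right (h2.trans h3) (by positivity)
      _ = v ^ n * Real.exp (-v) := by
          rw [mul_comm (Real.exp ((t-1)*v)), mul_assoc, ← Real.exp_add,
            show -(t * v) + (t - 1) * v = -v by ring]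

set_option maxHeartbeats 1600000 in
lemma tail_bound {N : ℕ} (hN : 1 ≤ N) {f : ℂ → ℂ} (hmem : memBargmann N f)
    {r : ℝ} (hr0 : 0 < r) (hr1 : r < 1) {z : ℂ} (hz : ‖z‖ ≤ r) :
    ‖f z - thetaTrunc N f z‖ ^ 2 * Real.exp (-(N : ℝ) * ‖z‖ ^ 2) ≤
      bnormSq N f * N * Real.exp 1 / (1 - r) ^ 2 * (r ^ 2 * Real.exp (1 - r ^ 2)) ^ N := by
  obtain ⟨hf, hF⟩ := hmem
  set M : ℝ := bnormSq N f with hMdef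
  have hM0 : 0 ≤ M := bnormSq_nonneg N f
  set ρ : ℝ := ‖z‖ with hρdef
  have hρ0 : 0 ≤ ρ := norm_nonneg z
  set x : ℝ := (N : ℝ) * ρ ^ 2 with hxdef
  have hx0 : 0 ≤ x := by positivity
  have hN0 : (0:ℝ) < N := by exact_mod_cast hN
  -- tail representation
  have hsum := (hasSum_taylor hf z).summable
  have htail : f z - thetaTrunc N f z = ∑' j : ℕ, taylorCoeff f (j + (N+1)) * z ^ (j + (N+1)) := by
    have h := Summable.sum_add_tsum_nat_add (f := fun k => taylorCoeff f k * z ^ k) (N+1) hsum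
    rw [(hasSum_taylor hf z).tsum_eq] at h
    rw [thetaTrunc, ← h]
    ring
  -- termwise bound
  set B : ℝ := Real.sqrt (M * N * x ^ (N+1) / ((N+1).factorial : ℝ)) with hBdef
  have hBval : B ^ 2 = M * N * x ^ (N+1) / ((N+1).factorial : ℝ) := by
    rw [hBdef, Real.sq_sqrt (by positivity)]
  have hterm : ∀ j : ℕ, ‖taylorCoeff f (j + (N+1)) * z ^ (j + (N+1))‖ ≤ B * r ^ j := by
    intro j
    set k : ℕ := j + (N+1) with hkdef
    have hnorm : ‖taylorCoeff f k * z ^ k‖ = ‖taylorCoeff f k‖ * ρ ^ k := by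
      rw [norm_mul, norm_pow, hρdef]
    have hsq : (‖taylorCoeff f k‖ * ρ ^ k) ^ 2 ≤ (B * r ^ j) ^ 2 := by
      have hcb := coeff_bound hN ⟨hf, hF⟩ k
      have hfac : (0:ℝ) < (k.factorial : ℝ) := by exact_mod_cast k.factorial_pos
      have hfac2 : (0:ℝ) < ((N+1).factorial : ℝ) := by exact_mod_cast (N+1).factorial_pos
      have e1 : (‖taylorCoeff f k‖ * ρ ^ k) ^ 2 = ‖taylorCoeff f k‖ ^ 2 * (ρ^2) ^ k := by
        rw [mul_pow, ← pow_mul, ← pow_mul, mul_comm 2 k]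
      have h2 : ‖taylorCoeff f k‖ ^ 2 ≤ M * (N:ℝ) ^ (k+1) / (k.factorial : ℝ) := by
        rw [le_div_iff₀ hfac]; exact hcb
      have h3 : ‖taylorCoeff f k‖ ^ 2 * (ρ^2) ^ k ≤ M * (N:ℝ) * (x ^ k / (k.factorial : ℝ)) := by
        have e2 : M * (N:ℝ) ^ (k+1) / (k.factorial : ℝ) * (ρ^2) ^ k
            = M * (N:ℝ) * (x ^ k / (k.factorial : ℝ)) := by
          rw [hxdef, mul_pow, pow_succ]
          ring
        calc ‖taylorCoeff f k‖ ^ 2 * (ρ^2) ^ k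
            ≤ (M * (N:ℝ) ^ (k+1) / (k.factorial : ℝ)) * (ρ^2) ^ k :=
              mul_le_mul_of_nonneg_right h2 (by positivity)
          _ = M * (N:ℝ) * (x ^ k / (k.factorial : ℝ)) := e2
      -- key combinatorial estimate
      have hkeym : x ^ k * (((N+1).factorial : ℝ)) ≤ x ^ (N+1) * r ^ (2*j) * (k.factorial : ℝ) := by
        have hx' : x ≤ ((N:ℝ)+2) * r^2 := by
          rw [hxdef]
          have : ρ^2 ≤ r^2 := by nlinarith
          nlinarith
        have hxj : x ^ j ≤ ((N:ℝ)+2) ^ j * (r^2) ^ j := by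
          calc x ^ j ≤ (((N:ℝ)+2) * r^2) ^ j := pow_le_pow_left₀ hx0 hx' j
            _ = ((N:ℝ)+2) ^ j * (r^2) ^ j := mul_pow _ _ _
        have hfact : ((N+1).factorial : ℝ) * ((N:ℝ)+2) ^ j ≤ (k.factorial : ℝ) := by
          have h0 := Nat.factorial_mul_pow_le_factorial (m := N+1) (n := j)
          have hcast : (((N+1).factorial * (N+1+1) ^ j : ℕ) : ℝ) ≤ ((N+1+j).factorial : ℝ) := by
            exact_mod_cast h0
          push_cast at hcast
          have hk' : k = N + 1 + j := by omega
          rw [hk']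
          convert hcast using 2 <;> push_cast <;> ring
        calc x ^ k * (((N+1).factorial : ℝ)) = x ^ (N+1) * (x ^ j * ((N+1).factorial : ℝ)) := by
              rw [hkdef, show j + (N+1) = (N+1) + j by omega, pow_add]
              ring
          _ ≤ x ^ (N+1) * ((((N:ℝ)+2) ^ j * (r^2) ^ j) * ((N+1).factorial : ℝ)) := by
              apply mul_le_mul_of_nonneg_left _ (by positivity)
              exact mul_le_mul_of_nonneg_right hxj hfac2.le
          _ = x ^ (N+1) * (r^2) ^ j * (((N+1).factorial : ℝ) * ((N:ℝ)+2) ^ j) := by ring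
          _ ≤ x ^ (N+1) * (r^2) ^ j * (k.factorial : ℝ) := by
              apply mul_le_mul_of_nonneg_left hfact
              positivity
          _ = x ^ (N+1) * r ^ (2*j) * (k.factorial : ℝ) := by
              rw [pow_mul]
      have hdiv : x ^ k / (k.factorial : ℝ)
          ≤ x ^ (N+1) * r ^ (2*j) / ((N+1).factorial : ℝ) := by
        rw [div_le_div_iff₀ hfac hfac2]
        exact hkeym
      have e3 : M * (N:ℝ) * (x ^ (N+1) * r ^ (2*j) / ((N+1).factorial : ℝ))
          = (B * r ^ j) ^ 2 := by
        rw [mul_pow B (r ^ j) 2, hBval, mul_comm 2 j, pow_mul]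
        ring
      calc (‖taylorCoeff f k‖ * ρ ^ k) ^ 2 = ‖taylorCoeff f k‖ ^ 2 * (ρ^2) ^ k := e1
        _ ≤ M * (N:ℝ) * (x ^ k / (k.factorial : ℝ)) := h3
        _ ≤ M * (N:ℝ) * (x ^ (N+1) * r ^ (2*j) / ((N+1).factorial : ℝ)) :=
            mul_le_mul_of_nonneg_left hdiv (by positivity)
        _ = (B * r ^ j) ^ 2 := e3
    have habs : ‖taylorCoeff f k‖ * ρ ^ k ≤ B * r ^ j := by
      have hb0 : 0 ≤ B * r ^ j :=
        mul_nonneg (Real.sqrt_nonneg _) (pow_nonneg hr0.le j)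
      have ha0 : 0 ≤ ‖taylorCoeff f k‖ * ρ ^ k :=
        mul_nonneg (norm_nonneg _) (pow_nonneg hρ0 k)
      calc ‖taylorCoeff f k‖ * ρ ^ k = Real.sqrt ((‖taylorCoeff f k‖ * ρ ^ k) ^ 2) :=
            (Real.sqrt_sq ha0).symm
        _ ≤ Real.sqrt ((B * r ^ j) ^ 2) := Real.sqrt_le_sqrt hsq
        _ = B * r ^ j := Real.sqrt_sq hb0
    rw [hnorm]
    exact habs
  -- sum the tail
  have hsummable : Summable (fun j : ℕ => ‖taylorCoeff f (j + (N+1)) * z ^ (j + (N+1))‖) := by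
    have h0 := summable_norm_taylor hf hρ0
    have h1 := (summable_nat_add_iff (N+1)).2 h0
    apply h1.congr
    intro j
    rw [norm_mul, norm_pow, hρdef]
  have htb : ‖f z - thetaTrunc N f z‖ ≤ B * (1 - r)⁻¹ := by
    rw [htail]
    calc ‖∑' j : ℕ, taylorCoeff f (j + (N+1)) * z ^ (j + (N+1))‖
        ≤ ∑' j : ℕ, ‖taylorCoeff f (j + (N+1)) * z ^ (j + (N+1))‖ :=
          norm_tsum_le_tsum_norm hsummable
      _ ≤ ∑' j : ℕ, B * r ^ j := by
          apply Summable.tsum_le_tsum hterm hsummable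
          exact (summable_geometric_of_lt_one hr0.le hr1).mul_left B
      _ = B * (1 - r)⁻¹ := by
          rw [tsum_mul_left, tsum_geometric_of_lt_one hr0.le hr1]
  -- final estimate
  have hB0 : 0 ≤ B := Real.sqrt_nonneg _
  have h1r : (0:ℝ) < 1 - r := by linarith
  have hsq2 : ‖f z - thetaTrunc N f z‖ ^ 2 ≤ B ^ 2 * ((1-r)^2)⁻¹ := by
    have := pow_le_pow_left₀ (norm_nonneg _) htb 2
    calc ‖f z - thetaTrunc N f z‖ ^ 2 ≤ (B * (1-r)⁻¹) ^ 2 := this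
      _ = B ^ 2 * ((1-r)^2)⁻¹ := by rw [mul_pow, inv_pow]
  have hw : Real.exp (-(N : ℝ) * ρ ^ 2) = Real.exp (-x) := by rw [hxdef]; ring_nf
  -- x^{N+1} e^{-x} / (N+1)! ≤ e * q^N
  have hxv : x ≤ (N:ℝ) * r^2 := by
    rw [hxdef]
    have : ρ^2 ≤ r^2 := by nlinarith
    nlinarith
  have hr2 : r^2 ≤ 1 := by nlinarith
  have hvn : (N:ℝ) * r^2 ≤ ((N+1 : ℕ):ℝ) := by
    push_cast
    nlinarith [mul_le_mul_of_nonneg_left hr2 hN0.le]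
  have hmono : x ^ (N+1) * Real.exp (-x) ≤ ((N:ℝ)*r^2) ^ (N+1) * Real.exp (-((N:ℝ)*r^2)) :=
    pow_mul_exp_neg_mono hx0 hxv (by exact_mod_cast hvn)
  set q : ℝ := r ^ 2 * Real.exp (1 - r ^ 2) with hqdef
  have hq0 : 0 ≤ q := by positivity
  have hfac2 : (0:ℝ) < ((N+1).factorial : ℝ) := by exact_mod_cast (N+1).factorial_pos
  have hfacb : ((N:ℝ)+1) ^ (N+1) / (((N+1).factorial):ℝ) ≤ Real.exp ((N:ℝ)+1) := by
    have h0 := Real.pow_div_factorial_le_exp (x := ((N:ℝ)+1)) (by positivity) (N+1)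
    exact h0
  set v : ℝ := (N:ℝ) * r^2 with hvdef
  have hv0 : 0 ≤ v := by positivity
  have e5 : Real.exp 1 ^ (N+1) = Real.exp ((N:ℝ)+1) := by
    rw [← Real.exp_nat_mul, mul_one]
    congr 1
    push_cast
    ring
  have s2 : v ^ (N+1) / (((N+1).factorial):ℝ) ≤ (r^2 * Real.exp 1) ^ (N+1) := by
    have hvd : v / ((N:ℝ)+1) ≤ r^2 := by
      rw [div_le_iff₀ (by positivity)]
      rw [hvdef]
      nlinarith [sq_nonneg r]
    calc v ^ (N+1) / (((N+1).factorial):ℝ)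
        = (v / ((N:ℝ)+1)) ^ (N+1) * (((N:ℝ)+1) ^ (N+1) / (((N+1).factorial):ℝ)) := by
          rw [div_pow]
          field_simp
      _ ≤ (v / ((N:ℝ)+1)) ^ (N+1) * Real.exp ((N:ℝ)+1) := by
          apply mul_le_mul_of_nonneg_left hfacb (by positivity)
      _ = (v / ((N:ℝ)+1) * Real.exp 1) ^ (N+1) := by
          rw [mul_pow, e5]
      _ ≤ (r^2 * Real.exp 1) ^ (N+1) := by
          apply pow_le_pow_left₀ (by positivity)
          exact mul_le_mul_of_nonneg_right hvd (Real.exp_pos 1).le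
  have s4 : (r^2 * Real.exp 1) ^ (N+1) * Real.exp (-v)
      = Real.exp 1 * r^2 * q ^ N := by
    have e6 : Real.exp (1 - r^2) ^ N = Real.exp ((N:ℝ) * (1 - r^2)) := (Real.exp_nat_mul _ N).symm
    have e7 : Real.exp ((N:ℝ)+1) * Real.exp (-v) = Real.exp 1 * Real.exp ((N:ℝ)*(1-r^2)) := by
      rw [← Real.exp_add, ← Real.exp_add]
      congr 1
      rw [hvdef]
      ring
    rw [hqdef, mul_pow, mul_pow, e5, e6, pow_succ]
    linear_combination ((r^2)^N * r^2) * e7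
  have hq : x ^ (N+1) * Real.exp (-x) / (((N+1).factorial):ℝ)
      ≤ Real.exp 1 * q ^ N := by
    calc x ^ (N+1) * Real.exp (-x) / (((N+1).factorial):ℝ)
        ≤ v ^ (N+1) * Real.exp (-v) / (((N+1).factorial):ℝ) := by
          exact (div_le_div_iff_of_pos_right hfac2).2 hmono
      _ = v ^ (N+1) / (((N+1).factorial):ℝ) * Real.exp (-v) := by ring
      _ ≤ (r^2 * Real.exp 1) ^ (N+1) * Real.exp (-v) :=
          mul_le_mul_of_nonneg_right s2 (Real.exp_pos _).le
      _ = Real.exp 1 * r^2 * q ^ N := s4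
      _ ≤ Real.exp 1 * 1 * q ^ N := by
          apply mul_le_mul_of_nonneg_right _ (pow_nonneg hq0 N)
          exact mul_le_mul_of_nonneg_left hr2 (Real.exp_pos 1).le
      _ = Real.exp 1 * q ^ N := by ring
  -- final assembly
  calc ‖f z - thetaTrunc N f z‖ ^ 2 * Real.exp (-(N : ℝ) * ρ ^ 2)
      = ‖f z - thetaTrunc N f z‖ ^ 2 * Real.exp (-x) := by rw [hw]
    _ ≤ B ^ 2 * ((1-r)^2)⁻¹ * Real.exp (-x) :=
        mul_le_mul_of_nonneg_right hsq2 (Real.exp_pos _).le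
    _ = (M * N / (1-r)^2) * (x ^ (N+1) * Real.exp (-x) / (((N+1).factorial):ℝ)) := by
        rw [hBval]
        ring
    _ ≤ (M * N / (1-r)^2) * (Real.exp 1 * q ^ N) := by
        apply mul_le_mul_of_nonneg_left hq
        exact div_nonneg (mul_nonneg hM0 hN0.le) (sq_nonneg _)
    _ = M * N * Real.exp 1 / (1 - r) ^ 2 * q ^ N := by ring

/-- For every `ε ∈ (0,1)` there are `C, a > 0` with
`∫_{|z|<1−ε} |Θ_N^⊥ f(z)|² e^{−N|z|²} ≤ C ‖f‖² N^{3/2} e^{−aN}` for all `N ≥ 1`, `f ∈ ℬ_N`. -/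
theorem stmt11 (ε : ℝ) (hε : ε ∈ Set.Ioo (0 : ℝ) 1) :
    ∃ C > (0 : ℝ), ∃ a > (0 : ℝ), ∀ N : ℕ, 1 ≤ N → ∀ f : ℂ → ℂ, memBargmann N f →
      (∫ z in {z : ℂ | ‖z‖ < 1 - ε},
          ‖f z - thetaTrunc N f z‖ ^ 2 * Real.exp (-(N : ℝ) * ‖z‖ ^ 2)) ≤
        C * bnormSq N f * (N : ℝ) ^ ((3 : ℝ) / 2) * Real.exp (-a * N) := by
  obtain ⟨hε0, hε1⟩ := hε
  set r : ℝ := 1 - ε with hrdef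
  have hr0 : 0 < r := by rw [hrdef]; linarith
  have hr1 : r < 1 := by rw [hrdef]; linarith
  have h1r : (0:ℝ) < 1 - r := by rw [hrdef]; linarith
  set q : ℝ := r ^ 2 * Real.exp (1 - r ^ 2) with hqdef
  have hq0 : 0 < q := by positivity
  have hq1 : q < 1 := by
    have ht1 : r ^ 2 < 1 := by nlinarith
    have hne : r ^ 2 - 1 ≠ 0 := by intro h; nlinarith
    have h := Real.add_one_lt_exp hne
    have h2 : r ^ 2 < Real.exp (r ^ 2 - 1) := by linarith
    calc q = r ^ 2 * Real.exp (1 - r ^ 2) := rfl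
      _ < Real.exp (r ^ 2 - 1) * Real.exp (1 - r ^ 2) :=
          mul_lt_mul_of_pos_right h2 (Real.exp_pos _)
      _ = 1 := by rw [← Real.exp_add]; norm_num
  have hC0 : (0:ℝ) < π * Real.exp 1 / (1 - r) ^ 2 :=
    div_pos (mul_pos pi_pos (Real.exp_pos 1)) (by positivity)
  have ha0 : (0:ℝ) < -Real.log q := by
    have := Real.log_neg hq0 hq1; linarith
  refine ⟨π * Real.exp 1 / (1 - r) ^ 2, hC0, -Real.log q, ha0, ?_⟩
  intro N hN f hmem
  set M : ℝ := bnormSq N f with hMdef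
  have hM0 : 0 ≤ M := bnormSq_nonneg N f
  have hN0 : (0:ℝ) < N := by exact_mod_cast hN
  set s : Set ℂ := {z : ℂ | ‖z‖ < r} with hsdef
  have hsball : s = Metric.ball (0:ℂ) r := by
    ext z
    rw [hsdef, Set.mem_setOf_eq, Metric.mem_ball, dist_zero_right]
  have hfin : volume s < ⊤ := by
    rw [hsball]; exact measure_ball_lt_top
  have htor : (volume s).toReal ≤ π := by
    rw [hsball, Complex.volume_ball, ENNReal.toReal_mul, ENNReal.toReal_pow,
      ENNReal.toReal_ofReal hr0.le]
    have : ((NNReal.pi : ℝ≥0∞)).toReal = π := by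
      simp [ENNReal.coe_toReal]
    rw [this]
    have hrr : r ^ 2 ≤ 1 := by nlinarith
    nlinarith [mul_le_mul_of_nonneg_right hrr pi_pos.le]
  set K : ℝ := M * N * Real.exp 1 / (1 - r) ^ 2 * q ^ N with hKdef
  have hK0 : 0 ≤ K := by
    rw [hKdef]
    apply mul_nonneg _ (pow_nonneg hq0.le N)
    exact div_nonneg (mul_nonneg (mul_nonneg hM0 hN0.le) (Real.exp_pos 1).le) (sq_nonneg _)
  set g : ℂ → ℝ := fun z => ‖f z - thetaTrunc N f z‖ ^ 2 * Real.exp (-(N : ℝ) * ‖z‖ ^ 2)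
    with hgdef
  have hgK : ∀ z ∈ s, ‖g z‖ ≤ K := by
    intro z hz
    rw [hsdef, Set.mem_setOf_eq] at hz
    have hb := tail_bound hN hmem hr0 hr1 (le_of_lt hz)
    rw [hgdef]
    simp only
    rw [Real.norm_of_nonneg (by positivity)]
    rw [hKdef]
    exact hb
  have hgm : AEStronglyMeasurable g (volume.restrict s) := by
    have hct : Continuous (thetaTrunc N f) := by
      unfold thetaTrunc
      exact continuous_finset_sum _ fun k _ => (continuous_const.mul (continuous_pow k))
    have hcf : Continuous f := hmem.1.continuous
    have : Continuous g := by
      rw [hgdef]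
      apply Continuous.mul
      · exact ((hcf.sub hct).norm.pow 2)
      · exact Real.continuous_exp.comp (by fun_prop)
    exact this.aestronglyMeasurable
  have hbound := norm_setIntegral_le_of_norm_le_const hfin hgK
  have hint : (∫ z in s, g z) ≤ K * π := by
    calc (∫ z in s, g z) ≤ ‖∫ z in s, g z‖ := le_abs_self _
      _ ≤ K * (volume s).toReal := hbound
      _ ≤ K * π := mul_le_mul_of_nonneg_left htor hK0
  have hqN : q ^ N = Real.exp (-(-Real.log q) * N) := by
    rw [neg_neg, mul_comm, Real.exp_nat_mul, Real.exp_log hq0]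
  have hNle : (N:ℝ) ≤ (N:ℝ) ^ ((3:ℝ)/2) := by
    calc (N:ℝ) = (N:ℝ) ^ (1:ℝ) := (Real.rpow_one _).symm
      _ ≤ (N:ℝ) ^ ((3:ℝ)/2) := by
          apply Real.rpow_le_rpow_of_exponent_le (by exact_mod_cast hN)
          norm_num
  have hfinal : K * π ≤ π * Real.exp 1 / (1 - r) ^ 2 * M * (N:ℝ) ^ ((3:ℝ)/2)
      * Real.exp (-(-Real.log q) * N) := by
    rw [← hqN]
    calc K * π = (π * Real.exp 1 / (1 - r) ^ 2 * M) * (N:ℝ) * q ^ N := by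
          rw [hKdef]; ring
      _ ≤ (π * Real.exp 1 / (1 - r) ^ 2 * M) * ((N:ℝ) ^ ((3:ℝ)/2)) * q ^ N := by
          apply mul_le_mul_of_nonneg_right _ (pow_nonneg hq0.le N)
          exact mul_le_mul_of_nonneg_left hNle (mul_nonneg hC0.le hM0)
      _ = π * Real.exp 1 / (1 - r) ^ 2 * M * (N:ℝ) ^ ((3:ℝ)/2) * q ^ N := by ring
  calc (∫ z in {z : ℂ | ‖z‖ < r}, ‖f z - thetaTrunc N f z‖ ^ 2
        * Real.exp (-(N : ℝ) * ‖z‖ ^ 2)) = ∫ z in s, g z := by rw [hsdef, hgdef]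
    _ ≤ K * π := hint
    _ ≤ _ := hfinal

end Proofs
end
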